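/- arXiv:2101.01319 — 3 statements merged into one kernel-verified Lean document; each statement's English description precedes it below -/
import Mathlib

section
/- Let (A, ∗, α) be a Hom-associative algebra over a field K, i.e., α(x)∗(y∗z) = (x∗y)∗α(z) for all x,y,z ∈ A, with α linear and multiplicative (α(x∗y) = α(x)∗α(y)). Define [x,y] = x∗y − y∗x. Then (A, [·,·], α) is a Hom-Lie algebra: the bracket is bilinear, skew-symmetric, and satisfies the Hom-Jacobi identity [α(x),[y,z]] + [α(y),[z,x]] + [α(z),[x,y]] = 0. -/
/-- A multiplicative Hom-associative algebra yields a Hom-Lie algebra via the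
commutator bracket: skew-symmetry and the Hom-Jacobi identity hold
(bilinearity is automatic since the bracket is built from the bilinear `mul`). -/
theorem homAssociative_gives_homLie
    {K : Type*} [Field K] {A : Type*} [AddCommGroup A] [Module K A]
    (mul : A →ₗ[K] A →ₗ[K] A) (α : A →ₗ[K] A)
    (homassoc : ∀ x y z : A, mul (α x) (mul y z) = mul (mul x y) (α z))
    (mult : ∀ x y : A, α (mul x y) = mul (α x) (α y))
    (bracket : A → A → A)
    (hb : ∀ x y : A, bracket x y = mul x y - mul y x) :
    (∀ x y : A, bracket x y = - bracket y x) ∧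
    (∀ x y z : A,
      bracket (α x) (bracket y z) + bracket (α y) (bracket z x)
        + bracket (α z) (bracket x y) = 0) := by
  refine ⟨fun x y => by rw [hb, hb]; abel, fun x y z => ?_⟩
  simp only [hb, map_sub, LinearMap.sub_apply, LinearMap.map_sub, LinearMap.sub_apply]
  rw [homassoc x y z, homassoc x z y, homassoc y z x, homassoc y x z,
    homassoc z x y, homassoc z y x]
  abel
end

section
/- Let (l, α_l) and (m, α_m) be multiplicative Hom-Lie algebras with a Hom-action of l on m, i.e., a bilinear map (x, n) ↦ x ▹ n satisfying (a) [x,y] ▹ α_m(n) = α_l(x) ▹ (y ▹ n) − α_l(y) ▹ (x ▹ n), (b) α_l(x) ▹ [n,n'] = [x ▹ n, α_m(n')] + [α_m(n), x ▹ n'], and (c) α_m(x ▹ n) = α_l(x) ▹ α_m(n). Then the semidirect product m ⋊ l, with underlying space m ⊕ l, bracket [(m₁,x₁),(m₂,x₂)] = ([m₁,m₂] + x₁ ▹ m₂ − x₂ ▹ m₁, [x₁,x₂]), and twisting map α̃(n,x) = (α_m(n), α_l(x)), is a Hom-Lie algebra: the bracket is skew-symmetric and satisfies the Hom-Jacobi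 identity with respect to α̃. -/
/-- The semidirect product of multiplicative Hom-Lie algebras along a
Hom-action is a Hom-Lie algebra: skew-symmetric and Hom-Jacobi. -/
theorem semidirect_product_is_homLie
    {K : Type*} [Field K]
    {l : Type*} [AddCommGroup l] [Module K l]
    {m : Type*} [AddCommGroup m] [Module K m]
    (brl : l →ₗ[K] l →ₗ[K] l) (αl : l →ₗ[K] l)
    (brm : m →ₗ[K] m →ₗ[K] m) (αm : m →ₗ[K] m)
    (skewl : ∀ x y : l, brl x y = - brl y x)
    (jacobil : ∀ x y z : l,
      brl (αl x) (brl y z) + brl (αl y) (brl z x) + brl (αl z) (brl x y) = 0)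
    (multl : ∀ x y : l, αl (brl x y) = brl (αl x) (αl y))
    (skewm : ∀ x y : m, brm x y = - brm y x)
    (jacobim : ∀ x y z : m,
      brm (αm x) (brm y z) + brm (αm y) (brm z x) + brm (αm z) (brm x y) = 0)
    (multm : ∀ x y : m, αm (brm x y) = brm (αm x) (αm y))
    (act : l →ₗ[K] m →ₗ[K] m)
    (ha : ∀ (x y : l) (n : m),
      act (brl x y) (αm n) = act (αl x) (act y n) - act (αl y) (act x n))
    (hb : ∀ (x : l) (n n' : m),
      act (αl x) (brm n n') = brm (act x n) (αm n') + brm (αm n) (act x n'))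
    (hc : ∀ (x : l) (n : m), αm (act x n) = act (αl x) (αm n))
    (B : m × l → m × l → m × l)
    (hB : ∀ p q : m × l,
      B p q = (brm p.1 q.1 + act p.2 q.1 - act q.2 p.1, brl p.2 q.2))
    (αt : m × l → m × l)
    (hαt : ∀ p : m × l, αt p = (αm p.1, αl p.2)) :
    (∀ p q : m × l, B p q = - B q p) ∧
    (∀ p q r : m × l,
      B (αt p) (B q r) + B (αt q) (B r p) + B (αt r) (B p q) = 0) := by
  constructor
  · intro p q
    rw [hB, hB, Prod.neg_mk, Prod.mk.injEq]
    constructor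
    · linear_combination (norm := abel1) skewm p.1 q.1
    · exact skewl p.2 q.2
  · intro p q r
    simp only [hB, hαt, Prod.mk_add_mk, Prod.mk.injEq, map_add, map_sub,
      LinearMap.add_apply, LinearMap.sub_apply, Prod.mk_eq_zero]
    constructor
    · linear_combination (norm := abel1) jacobim p.1 q.1 r.1
        + hb p.2 q.1 r.1 + hb q.2 r.1 p.1 + hb r.2 p.1 q.1
        - ha q.2 r.2 p.1 - ha r.2 p.2 q.1 - ha p.2 q.2 r.1
        + skewm (act p.2 q.1) (αm r.1) + skewm (act q.2 r.1) (αm p.1)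
        + skewm (act r.2 p.1) (αm q.1)
    · exact jacobil p.2 q.2 r.2
end

section
/- Let (g, [·,·], β) be a multiplicative Hom-Lie algebra and d₁, d₂ two β^k-derivations of g for the same nonnegative integer k, i.e., dᵢ ∘ β^k = β^k ∘ dᵢ and dᵢ([u,v]) = [dᵢ(u), β^k(v)] + [β^k(u), dᵢ(v)]. Then the commutator [d₁, d₂] = d₁∘d₂ − d₂∘d₁ is a β^{2k}-derivation of g. -/
/-- The commutator of two `β^k`-derivations of a multiplicative Hom-Lie
algebra is a `β^(2k)`-derivation. -/
theorem commutator_of_derivations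
    {K : Type*} [Field K] {g : Type*} [AddCommGroup g] [Module K g]
    (br : g →ₗ[K] g →ₗ[K] g) (β : g →ₗ[K] g)
    (skew : ∀ u v : g, br u v = - br v u)
    (jacobi : ∀ u v w : g,
      br (β u) (br v w) + br (β v) (br w u) + br (β w) (br u v) = 0)
    (mult : ∀ u v : g, β (br u v) = br (β u) (β v))
    (k : ℕ) (d₁ d₂ : g →ₗ[K] g)
    (hc₁ : ∀ u : g, d₁ ((β ^ k) u) = (β ^ k) (d₁ u))
    (hc₂ : ∀ u : g, d₂ ((β ^ k) u) = (β ^ k) (d₂ u))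
    (hd₁ : ∀ u v : g, d₁ (br u v) = br (d₁ u) ((β ^ k) v) + br ((β ^ k) u) (d₁ v))
    (hd₂ : ∀ u v : g, d₂ (br u v) = br (d₂ u) ((β ^ k) v) + br ((β ^ k) u) (d₂ v))
    (D : g → g) (hD : ∀ u : g, D u = d₁ (d₂ u) - d₂ (d₁ u)) :
    (∀ u : g, D ((β ^ (2 * k)) u) = (β ^ (2 * k)) (D u)) ∧
    (∀ u v : g,
      D (br u v) = br (D u) ((β ^ (2 * k)) v) + br ((β ^ (2 * k)) u) (D v)) := by
  have h2k : ∀ u : g, (β ^ (2 * k)) u = (β ^ k) ((β ^ k) u) := by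
    intro u
    rw [two_mul, pow_add, Module.End.mul_apply]
  constructor
  · intro u
    simp only [hD, h2k, hc₁, hc₂, map_sub]
  · intro u v
    simp only [hD, hd₁, hd₂, map_add, map_sub, LinearMap.sub_apply, hc₁, hc₂, h2k]
    abel
end
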